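/- Let G₁, …, Gₙ : ℝ → ℝ be differentiable functions and ε₁,…,εₙ ∈ {1,-1}. Suppose for each i, εᵢ·n·Gᵢ'(xᵢ) = Σₖ εₖ·Gₖ'(xₖ) holds for all (x₁,…,xₙ) ∈ ℝⁿ. Then there exist constants a, bᵢ such that Gᵢ(t) = 2a·εᵢ·t + bᵢ for each i. -/

import Mathlib

theorem separated_derivative_equation_affine
    (n : ℕ) (hn : 2 ≤ n)
    (ε : Fin n → ℝ) (hε : ∀ i, ε i = 1 ∨ ε i = -1)
    (G : Fin n → ℝ → ℝ) (hG : ∀ i, Differentiable ℝ (G i))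
    (heq : ∀ i : Fin n, ∀ x : Fin n → ℝ,
      ε i * (n : ℝ) * deriv (G i) (x i) = ∑ k, ε k * deriv (G k) (x k)) :
    ∃ a : ℝ, ∃ b : Fin n → ℝ, ∀ i t, G i t = 2 * a * ε i * t + b i := by
  have hne : ∀ i, ε i ≠ 0 := by
    intro i; rcases hε i with h | h <;> rw [h] <;> norm_num
  have hsq : ∀ i, ε i * ε i = 1 := by
    intro i; rcases hε i with h | h <;> rw [h] <;> norm_num
  haveI : NeZero n := ⟨by omega⟩
  -- constancy of derivatives
  have hconst : ∀ j : Fin n, ∀ s t : ℝ, deriv (G j) s = deriv (G j) t := by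
    intro j s t
    obtain ⟨i, hij⟩ : ∃ i : Fin n, i ≠ j := by
      rcases hε j with _ | _
      all_goals {
        by_cases h0 : j = (0 : Fin n)
        · exact ⟨⟨1, by omega⟩, by simp [h0, Fin.ext_iff]⟩
        · exact ⟨0, fun h => h0 h.symm⟩ }
    have h1 := heq i (Function.update (fun _ => (0:ℝ)) j s)
    have h2 := heq i (Function.update (fun _ => (0:ℝ)) j t)
    rw [Function.update_of_ne hij] at h1 h2
    have hsum : ∑ k, ε k * deriv (G k) (Function.update (fun _ => (0:ℝ)) j s k)
        = ∑ k, ε k * deriv (G k) (Function.update (fun _ => (0:ℝ)) j t k) := by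
      rw [← h1, ← h2]
    rw [Finset.sum_eq_sum_sdiff_singleton_add (Finset.mem_univ j),
        Finset.sum_eq_sum_sdiff_singleton_add (Finset.mem_univ j)] at hsum
    simp only [Function.update_self] at hsum
    have hrest : ∀ k ∈ Finset.univ \ {j},
        ε k * deriv (G k) (Function.update (fun _ => (0:ℝ)) j s k)
          = ε k * deriv (G k) (Function.update (fun _ => (0:ℝ)) j t k) := by
      intro k hk
      rw [Finset.mem_sdiff, Finset.mem_singleton] at hk
      rw [Function.update_of_ne hk.2, Function.update_of_ne hk.2]
    rw [Finset.sum_congr rfl hrest] at hsum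
    exact mul_left_cancel₀ (hne j) (add_left_cancel hsum)
  set D : Fin n → ℝ := fun j => deriv (G j) 0 with hD
  -- the equation at 0
  have h0 : ∀ i : Fin n, ε i * (n : ℝ) * D i = ∑ k, ε k * D k := by
    intro i; exact heq i (fun _ => 0)
  have hsame : ∀ i : Fin n, ε i * D i = ε 0 * D 0 := by
    intro i
    have h1 := h0 i
    have h2 := h0 0
    have : ε i * (n : ℝ) * D i = ε 0 * (n : ℝ) * D 0 := h1.trans h2.symm
    have hn0 : (n : ℝ) ≠ 0 := Nat.cast_ne_zero.mpr (NeZero.ne n)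
    exact mul_left_cancel₀ hn0
      (show (n:ℝ) * (ε i * D i) = (n:ℝ) * (ε 0 * D 0) by linear_combination this)
  refine ⟨ε 0 * D 0 / 2, fun i => G i 0, ?_⟩
  intro i t
  have hderiv : ∀ s, deriv (G i) s = 2 * (ε 0 * D 0 / 2) * ε i := by
    intro s
    have : ε i * (ε i * D i) = ε i * (ε 0 * D 0) := by rw [hsame i]
    rw [← mul_assoc, hsq i, one_mul] at this
    rw [hconst i s 0]
    show D i = _
    rw [this]; ring
  -- G i t - (2*a*ε i)*t is constant
  have key : ∀ u : ℝ, G i u - 2 * (ε 0 * D 0 / 2) * ε i * u = G i 0 := by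
    intro u
    have hd : ∀ v : ℝ, HasDerivAt (fun w => G i w - 2 * (ε 0 * D 0 / 2) * ε i * w) 0 v := by
      intro v
      have h1 : HasDerivAt (G i) (2 * (ε 0 * D 0 / 2) * ε i) v := by
        rw [← hderiv v]; exact ((hG i).differentiableAt).hasDerivAt
      have h2 : HasDerivAt (fun w : ℝ => 2 * (ε 0 * D 0 / 2) * ε i * w)
          (2 * (ε 0 * D 0 / 2) * ε i) v := by
        simpa using (hasDerivAt_id v).const_mul (2 * (ε 0 * D 0 / 2) * ε i)
      have h3 := h1.sub h2
      rw [sub_self] at h3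
      exact h3
    have := is_const_of_deriv_eq_zero (f := fun w => G i w - 2 * (ε 0 * D 0 / 2) * ε i * w)
      (fun v => ((hd v).differentiableAt)) (fun v => (hd v).deriv) u 0
    simpa using this
  have := key t
  linarith [this]
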